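/- arXiv:1301.1182 — 3 statements merged into one kernel-verified Lean document; each statement's English description precedes it below -/
import Mathlib

section
/- Let A ∈ B+(X) and κ ≥ 1. Suppose there exists a constant ε ∈ (0,1) such that Σ_{n≥1} κ^n F^n(x,A) ≤ ε for all x ∈ A. Then Σ_{n≥1} κ^n P^n(x,A) ≤ ε/(1−ε) for all x ∈ A. -/
open MeasureTheory ProbabilityTheory
open scoped ENNReal NNReal Classical

namespace MarkovTransience

variable {X : Type*} [MeasurableSpace X]

/-- `iterP P n x A` is the `n`-step transition probability `P^n(x, A)`. -/
noncomputable def iterP (P : Kernel X X) : ℕ → X → Set X → ℝ≥0∞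
  | 0 => fun x A => A.indicator (fun _ => 1) x
  | n + 1 => fun x A => ∫⁻ y, iterP P n y A ∂(P x)

/-- `retF P A n x` is `F^n(x, A) = P_x(τ_A = n)`, the probability that the first
return to `A` happens at time `n`. -/
noncomputable def retF (P : Kernel X X) (A : Set X) : ℕ → X → ℝ≥0∞
  | 0 => fun _ => 0
  | 1 => fun x => P x A
  | n + 2 => fun x => ∫⁻ y in Aᶜ, retF P A (n + 1) y ∂(P x)

/-- `retL P A x = L(x, A) = P_x(τ_A < ∞)`. -/
noncomputable def retL (P : Kernel X X) (A : Set X) (x : X) : ℝ≥0∞ :=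
  ∑' n, retF P A n x

/-- `retE P A r x = E_x[r(τ_A) 1_{τ_A < ∞}]`. -/
noncomputable def retE (P : Kernel X X) (A : Set X) (r : ℕ → ℝ≥0∞) (x : X) : ℝ≥0∞ :=
  ∑' n, r n * retF P A n x

/-- `hitE P A r x = E_x[r(σ_A) 1_{σ_A < ∞}]`, `σ_A` the first hitting time. -/
noncomputable def hitE (P : Kernel X X) (A : Set X) (r : ℕ → ℝ≥0∞) (x : X) : ℝ≥0∞ :=
  if x ∈ A then r 0 else retE P A r x

/-- `act P W x = PW(x) = ∫ W(y) P(x, dy)`. -/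
noncomputable def act (P : Kernel X X) (W : X → ℝ≥0∞) (x : X) : ℝ≥0∞ :=
  ∫⁻ y, W y ∂(P x)

/-- `ψ`-irreducibility: `ψ` is a nontrivial σ-finite measure such that every set of
positive `ψ`-measure is reached with positive probability from every starting point. -/
def IsIrreducibility (P : Kernel X X) (ψ : Measure X) : Prop :=
  ψ ≠ 0 ∧ SigmaFinite ψ ∧
    ∀ A : Set X, MeasurableSet A → 0 < ψ A → ∀ x, 0 < ∑' n, iterP P (n + 1) x A

/-- `ψ` is a maximal irreducibility measure for `P`. -/
def IsMaxIrreducibility (P : Kernel X X) (ψ : Measure X) : Prop :=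
  IsIrreducibility P ψ ∧ ∀ ψ' : Measure X, IsIrreducibility P ψ' → ψ' ≪ ψ

/-- `A ∈ B⁺(X)`: a measurable set of positive `ψ`-measure. -/
def InBPlus (ψ : Measure X) (A : Set X) : Prop :=
  MeasurableSet A ∧ 0 < ψ A

/-- A petite set. -/
def PetiteSet (P : Kernel X X) (A : Set X) : Prop :=
  ∃ (a : ℕ → ℝ≥0∞) (ν : Measure X), (∑' n, a n) = 1 ∧ ν ≠ 0 ∧
    ∀ x ∈ A, ∀ B : Set X, MeasurableSet B → ν B ≤ ∑' n, a n * iterP P (n + 1) x B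

/-- The chain is transient. -/
def Transient (P : Kernel X X) (ψ : Measure X) : Prop :=
  IsMaxIrreducibility P ψ ∧
    ∃ A : ℕ → Set X, (⋃ i, A i) = Set.univ ∧
      ∀ i, InBPlus ψ (A i) ∧ (⨆ x ∈ A i, ∑' n, iterP P (n + 1) x (A i)) < ⊤

/-- A uniformly geometric transient set. -/
def UnifGeomTransientSet (P : Kernel X X) (A : Set X) : Prop :=
  ∃ κ : ℝ≥0, 1 < κ ∧ (⨆ x ∈ A, ∑' n, (κ : ℝ≥0∞) ^ (n + 1) * iterP P (n + 1) x A) < ⊤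

/-- The chain is geometrically transient. -/
def GeomTransient (P : Kernel X X) (ψ : Measure X) : Prop :=
  IsMaxIrreducibility P ψ ∧
    ∃ (D : Set X) (A : ℕ → Set X), ψ D = 0 ∧ D ∪ (⋃ i, A i) = Set.univ ∧
      ∀ i, InBPlus ψ (A i) ∧ UnifGeomTransientSet P (A i)

/-- A uniformly `ℓ`-transient set. -/
def UnifAlgTransientSet (P : Kernel X X) (ℓ : ℕ) (A : Set X) : Prop :=
  (⨆ x ∈ A, ∑' n, ((n + 1 : ℕ) : ℝ≥0∞) ^ ℓ * iterP P (n + 1) x A) < ⊤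

/-- The chain is algebraically (`ℓ`-)transient. -/
def AlgTransient (P : Kernel X X) (ψ : Measure X) (ℓ : ℕ) : Prop :=
  IsMaxIrreducibility P ψ ∧
    ∃ (D : Set X) (A : ℕ → Set X), ψ D = 0 ∧ D ∪ (⋃ i, A i) = Set.univ ∧
      ∀ i, InBPlus ψ (A i) ∧ UnifAlgTransientSet P ℓ (A i)

/-- `lifeDist P x n = P_x(τ = n)` where `τ = sup{n : Φ_n ∈ X}` is the lifetime of the
(sub-stochastic) chain, so that `P_x(τ = n) = P^n(x, X) - P^{n+1}(x, X)`. -/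
noncomputable def lifeDist (P : Kernel X X) (x : X) (n : ℕ) : ℝ≥0∞ :=
  iterP P n x Set.univ - iterP P (n + 1) x Set.univ

/-- `lifeE P r x = E_x[r(τ)]` for the lifetime `τ` (on the event `τ < ∞`). -/
noncomputable def lifeE (P : Kernel X X) (r : ℕ → ℝ≥0∞) (x : X) : ℝ≥0∞ :=
  ∑' n, r n * lifeDist P x n

/-- The family `Λ` of normalized increasing submultiplicative rate functions. -/
def InLambda (r : ℕ → ℝ≥0) : Prop :=
  Monotone r ∧ r 0 = 1 ∧ (∀ n, 1 ≤ r n) ∧ ∀ m n, r (m + n) ≤ r m * r n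

/-- first-entrance integral operator -/
noncomputable def FInt (P : Kernel X X) (A : Set X) : ℕ → (X → ℝ≥0∞) → X → ℝ≥0∞
  | 0 => fun _ _ => 0
  | 1 => fun g x => ∫⁻ y in A, g y ∂(P x)
  | n + 2 => fun g x => ∫⁻ y in Aᶜ, FInt P A (n + 1) g y ∂(P x)

lemma measurable_iterP (P : Kernel X X) {B : Set X} (hB : MeasurableSet B) :
    ∀ n, Measurable fun x => iterP P n x B := by
  intro n
  induction n with
  | zero =>
    simpa [iterP] using (measurable_const.indicator hB : Measurable (B.indicator fun _ => (1:ℝ≥0∞)))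
  | succ n ih =>
    exact (Measure.measurable_lintegral ih).comp P.measurable

lemma measurable_FInt (P : Kernel X X) {A : Set X} (hA : MeasurableSet A)
    {g : X → ℝ≥0∞} (hg : Measurable g) :
    ∀ n, Measurable (FInt P A n g) := by
  intro n
  induction n with
  | zero => simpa [FInt] using measurable_const
  | succ n ih =>
    match n, ih with
    | 0, _ =>
      have : (FInt P A 1 g) = fun x => ∫⁻ y, A.indicator g y ∂(P x) := by
        funext x; rw [lintegral_indicator hA]; rfl
      rw [this]
      exact (Measure.measurable_lintegral (hg.indicator hA)).comp P.measurable
    | (m+1), ih =>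
      have : (FInt P A (m+2) g) = fun x => ∫⁻ y, Aᶜ.indicator (FInt P A (m+1) g) y ∂(P x) := by
        funext x; rw [lintegral_indicator hA.compl]; rfl
      rw [this]
      exact (Measure.measurable_lintegral (ih.indicator hA.compl)).comp P.measurable

lemma FInt_one_eq_retF (P : Kernel X X) {A : Set X} :
    ∀ n x, FInt P A (n+1) (fun _ => 1) x = retF P A (n+1) x := by
  intro n
  induction n with
  | zero => intro x; simp [FInt, retF, setLIntegral_one]
  | succ n ih =>
    intro x
    show ∫⁻ y in Aᶜ, FInt P A (n+1) (fun _ => 1) y ∂(P x) = ∫⁻ y in Aᶜ, retF P A (n+1) y ∂(P x)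
    exact lintegral_congr fun y => ih y

lemma FInt_mono (P : Kernel X X) {A : Set X} (hA : MeasurableSet A)
    {g g' : X → ℝ≥0∞} (h : ∀ y ∈ A, g y ≤ g' y) :
    ∀ n x, FInt P A (n+1) g x ≤ FInt P A (n+1) g' x := by
  intro n
  induction n with
  | zero => intro x; exact setLIntegral_mono' hA h
  | succ n ih => intro x; exact lintegral_mono fun y => ih y

lemma FInt_const_mul (P : Kernel X X) {A : Set X} {c : ℝ≥0∞} (hc : c ≠ ⊤)
    (g : X → ℝ≥0∞) :
    ∀ n x, FInt P A (n+1) (fun y => c * g y) x = c * FInt P A (n+1) g x := by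
  intro n
  induction n with
  | zero => intro x; exact lintegral_const_mul' c g hc
  | succ n ih =>
    intro x
    show ∫⁻ y in Aᶜ, FInt P A (n+1) (fun y => c * g y) y ∂(P x)
        = c * ∫⁻ y in Aᶜ, FInt P A (n+1) g y ∂(P x)
    rw [← lintegral_const_mul' c _ hc]
    exact lintegral_congr fun y => ih y

lemma FInt_finset_sum (P : Kernel X X) {A : Set X} (hA : MeasurableSet A)
    (s : Finset ℕ) (g : ℕ → X → ℝ≥0∞) (hg : ∀ m, Measurable (g m)) :
    ∀ n x, FInt P A (n+1) (fun y => ∑ m ∈ s, g m y) x = ∑ m ∈ s, FInt P A (n+1) (g m) x := by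
  intro n
  induction n with
  | zero =>
    intro x
    exact lintegral_finset_sum' s fun m _ => (hg m).aemeasurable
  | succ n ih =>
    intro x
    show ∫⁻ y in Aᶜ, FInt P A (n+1) (fun y => ∑ m ∈ s, g m y) y ∂(P x) = _
    rw [lintegral_congr fun y => ih y]
    exact lintegral_finset_sum' s fun m _ => (measurable_FInt P hA (hg m) (n+1)).aemeasurable

/-- First-entrance decomposition. -/
lemma iterP_decomp (P : Kernel X X) {A : Set X} (hA : MeasurableSet A) :
    ∀ n x, iterP P (n+1) x A
      = ∑ k ∈ Finset.range (n+1), FInt P A (k+1) (fun y => iterP P (n-k) y A) x := by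
  intro n
  induction n with
  | zero =>
    intro x
    rw [Finset.sum_range_one]
    show ∫⁻ y, A.indicator (fun _ => 1) y ∂(P x) = ∫⁻ y in A, A.indicator (fun _ => 1) y ∂(P x)
    rw [lintegral_indicator hA, setLIntegral_indicator hA, Set.inter_self]
  | succ n ih =>
    intro x
    have hsplit : iterP P (n+2) x A
        = (∫⁻ y in A, iterP P (n+1) y A ∂(P x)) + ∫⁻ y in Aᶜ, iterP P (n+1) y A ∂(P x) :=
      (lintegral_add_compl (fun y => iterP P (n+1) y A) hA).symm
    have hcompl : ∫⁻ y in Aᶜ, iterP P (n+1) y A ∂(P x)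
        = ∑ k ∈ Finset.range (n+1), FInt P A (k+2) (fun y => iterP P (n-k) y A) x := by
      rw [lintegral_congr fun y => ih y]
      exact lintegral_finset_sum' _ fun k _ =>
        (measurable_FInt P hA (measurable_iterP P hA (n-k)) (k+1)).aemeasurable
    rw [hsplit, hcompl]
    rw [Finset.sum_range_succ' (fun k => FInt P A (k+1) (fun y => iterP P (n+1-k) y A) x) (n+1)]
    simp only [Nat.succ_sub_succ_eq_sub, Nat.sub_zero]
    rw [add_comm]
    rfl


theorem geometric_return_sum_le_of_first_return_sum_le
    {X : Type*} [MeasurableSpace X] [MeasurableSpace.CountablyGenerated X]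
    (P : Kernel X X) (hP : ∀ x, P x Set.univ ≤ 1) (ψ : Measure X)
    (hψ : IsMaxIrreducibility P ψ) (A : Set X) (hA : InBPlus ψ A)
    (κ : ℝ≥0) (hκ : 1 ≤ κ) (ε : ℝ) (hε0 : 0 < ε) (hε1 : ε < 1)
    (h : ∀ x ∈ A, (∑' n, (κ : ℝ≥0∞) ^ (n + 1) * retF P A (n + 1) x) ≤ ENNReal.ofReal ε) :
    ∀ x ∈ A, (∑' n, (κ : ℝ≥0∞) ^ (n + 1) * iterP P (n + 1) x A) ≤
      ENNReal.ofReal (ε / (1 - ε)) := by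
  obtain ⟨hAm, -⟩ := hA
  set e := ENNReal.ofReal ε with he
  set c := ENNReal.ofReal (ε / (1 - ε)) with hc
  have h1ε : (0:ℝ) < 1 - ε := by linarith
  have hce : e + c * e = c := by
    rw [hc, he, ← ENNReal.ofReal_mul (by positivity), ← ENNReal.ofReal_add hε0.le (by positivity)]
    congr 1
    field_simp
    ring
  have hκt : ∀ m : ℕ, ((κ:ℝ≥0∞)^m) ≠ ⊤ := fun m => ENNReal.pow_ne_top ENNReal.coe_ne_top
  have hct : (1:ℝ≥0∞) + c ≠ ⊤ :=
    ENNReal.add_ne_top.mpr ⟨ENNReal.one_ne_top, ENNReal.ofReal_ne_top⟩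
  have main : ∀ N, ∀ x ∈ A,
      ∑ n ∈ Finset.range N, (κ:ℝ≥0∞)^(n+1) * iterP P (n+1) x A ≤ c := by
    intro N
    induction N with
    | zero => intro x hx; simp
    | succ N ih =>
      intro x hx
      set g : X → ℝ≥0∞ := fun y => ∑ m ∈ Finset.range (N+1), (κ:ℝ≥0∞)^m * iterP P m y A with hg
      have hgm : ∀ m : ℕ, Measurable (fun y => (κ:ℝ≥0∞)^m * iterP P m y A) := fun m =>
        (measurable_iterP P hAm m).const_mul _
      set H : ℕ → ℕ → ℝ≥0∞ := fun k m =>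
        (κ:ℝ≥0∞)^(k+1) * FInt P A (k+1) (fun y => (κ:ℝ≥0∞)^m * iterP P m y A) x with hH
      have hgbound : ∀ y ∈ A, g y ≤ 1 + c := by
        intro y hy
        show (∑ m ∈ Finset.range (N+1), (κ:ℝ≥0∞)^m * iterP P m y A) ≤ 1 + c
        rw [Finset.sum_range_succ' (fun m => (κ:ℝ≥0∞)^m * iterP P m y A) N]
        have h0 : (κ:ℝ≥0∞)^0 * iterP P 0 y A = 1 := by
          simp [iterP, Set.indicator_of_mem hy]
        rw [h0, add_comm]
        exact add_le_add_right (ih y hy) 1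
      have e1 : ∀ n ∈ Finset.range (N+1),
          (κ:ℝ≥0∞)^(n+1) * iterP P (n+1) x A
          = ∑ k ∈ Finset.range (n+1), H k (n-k) := by
        intro n hn
        rw [iterP_decomp P hAm n x, Finset.mul_sum]
        refine Finset.sum_congr rfl fun k hk => ?_
        simp only [hH]
        rw [FInt_const_mul P (hκt (n-k)) _ k x, ← mul_assoc, ← pow_add]
        have hkn : k ≤ n := Nat.lt_succ_iff.mp (Finset.mem_range.mp hk)
        have : k + 1 + (n - k) = n + 1 := by omega
        rw [this]
      have hinj : ∀ p ∈ (Finset.range (N+1)).sigma (fun n => Finset.range (n+1)),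
          ∀ p' ∈ (Finset.range (N+1)).sigma (fun n => Finset.range (n+1)),
          (fun p : Σ _ : ℕ, ℕ => (p.2, p.1 - p.2)) p
            = (fun p : Σ _ : ℕ, ℕ => (p.2, p.1 - p.2)) p' → p = p' := by
        rintro ⟨n, k⟩ hp ⟨n', k'⟩ hp' hpp
        have hk : k < n + 1 := Finset.mem_range.mp (Finset.mem_sigma.mp hp).2
        have hk' : k' < n' + 1 := Finset.mem_range.mp (Finset.mem_sigma.mp hp').2
        obtain rfl : k = k' := congrArg Prod.fst hpp
        obtain rfl : n = n' := by
          have h2 : n - k = n' - k := congrArg Prod.snd hpp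
          omega
        rfl
      have hsub : ((Finset.range (N+1)).sigma (fun n => Finset.range (n+1))).image
            (fun p : Σ _ : ℕ, ℕ => (p.2, p.1 - p.2))
          ⊆ Finset.range (N+1) ×ˢ Finset.range (N+1) := by
        intro q hq
        rw [Finset.mem_image] at hq
        obtain ⟨p, hp, rfl⟩ := hq
        have hn : p.1 < N + 1 := Finset.mem_range.mp (Finset.mem_sigma.mp hp).1
        have hk : p.2 < p.1 + 1 := Finset.mem_range.mp (Finset.mem_sigma.mp hp).2
        simp only [Finset.mem_product, Finset.mem_range]
        exact ⟨by omega, by omega⟩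
      have tri : ∑ n ∈ Finset.range (N+1), ∑ k ∈ Finset.range (n+1), H k (n-k)
          ≤ ∑ k ∈ Finset.range (N+1), ∑ m ∈ Finset.range (N+1), H k m := by
        calc ∑ n ∈ Finset.range (N+1), ∑ k ∈ Finset.range (n+1), H k (n-k)
            = ∑ p ∈ (Finset.range (N+1)).sigma (fun n => Finset.range (n+1)),
                H p.2 (p.1 - p.2) := by rw [Finset.sum_sigma']
          _ = ∑ q ∈ ((Finset.range (N+1)).sigma (fun n => Finset.range (n+1))).image
                (fun p : Σ _ : ℕ, ℕ => (p.2, p.1 - p.2)), H q.1 q.2 :=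
              (Finset.sum_image (f := fun q : ℕ × ℕ => H q.1 q.2) hinj).symm
          _ ≤ ∑ q ∈ Finset.range (N+1) ×ˢ Finset.range (N+1), H q.1 q.2 :=
              Finset.sum_le_sum_of_subset hsub
          _ = ∑ k ∈ Finset.range (N+1), ∑ m ∈ Finset.range (N+1), H k m :=
              Finset.sum_product _ _ _
      have hsquare : ∀ k ∈ Finset.range (N+1),
          ∑ m ∈ Finset.range (N+1), H k m = (κ:ℝ≥0∞)^(k+1) * FInt P A (k+1) g x := by
        intro k _
        simp only [hH]
        rw [← Finset.mul_sum]
        congr 1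
        rw [hg]
        exact (FInt_finset_sum P hAm _ _ hgm k x).symm
      have step2 : ∀ k ∈ Finset.range (N+1),
          (κ:ℝ≥0∞)^(k+1) * FInt P A (k+1) g x
            ≤ (1+c) * ((κ:ℝ≥0∞)^(k+1) * retF P A (k+1) x) := by
        intro k _
        rw [← mul_assoc, mul_comm ((1:ℝ≥0∞)+c) ((κ:ℝ≥0∞)^(k+1)), mul_assoc]
        refine mul_le_mul_right ?_ _
        calc FInt P A (k+1) g x ≤ FInt P A (k+1) (fun _ => (1+c) * 1) x :=
              FInt_mono P hAm (fun y hy => by simpa using hgbound y hy) k x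
          _ = (1+c) * FInt P A (k+1) (fun _ => 1) x := FInt_const_mul P hct _ k x
          _ = (1+c) * retF P A (k+1) x := by rw [FInt_one_eq_retF]
      have step3 : ∑ k ∈ Finset.range (N+1), (κ:ℝ≥0∞)^(k+1) * retF P A (k+1) x ≤ e :=
        le_trans (ENNReal.sum_le_tsum _) (h x hx)
      calc ∑ n ∈ Finset.range (N+1), (κ:ℝ≥0∞)^(n+1) * iterP P (n+1) x A
          = ∑ n ∈ Finset.range (N+1), ∑ k ∈ Finset.range (n+1), H k (n-k) :=
            Finset.sum_congr rfl e1
        _ ≤ ∑ k ∈ Finset.range (N+1), ∑ m ∈ Finset.range (N+1), H k m := tri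
        _ = ∑ k ∈ Finset.range (N+1), (κ:ℝ≥0∞)^(k+1) * FInt P A (k+1) g x :=
            Finset.sum_congr rfl hsquare
        _ ≤ ∑ k ∈ Finset.range (N+1), (1+c) * ((κ:ℝ≥0∞)^(k+1) * retF P A (k+1) x) :=
            Finset.sum_le_sum step2
        _ = (1+c) * ∑ k ∈ Finset.range (N+1), (κ:ℝ≥0∞)^(k+1) * retF P A (k+1) x :=
            (Finset.mul_sum _ _ _).symm
        _ ≤ (1+c) * e := mul_le_mul_right step3 _
        _ = e + c * e := by ring
        _ = c := hce
  intro x hx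
  rw [ENNReal.tsum_eq_iSup_sum]
  refine iSup_le fun s => ?_
  obtain ⟨N, hN⟩ := s.exists_nat_subset_range
  exact le_trans (Finset.sum_le_sum_of_subset hN) (main N x hx)

end MarkovTransience
end

section
/- Let A ∈ B+(X) and let ℓ ≥ 1 be an integer. Then for all x ∈ X, E_x[(τ_A+1)^ℓ 1_{τ_A<∞}] = ∫_{A^c} E_y[(τ_A+1)^ℓ 1_{τ_A<∞}] P(x,dy) + P(x,A) + Σ_{k=0}^{ℓ−1} C(ℓ,k) E_x[τ_A^k 1_{τ_A<∞}], where C(ℓ,k) is the binomial coefficient. Moreover, the function x ↦ E_x[(σ_A+1)^ℓ 1_{σ_A<∞}] is the minimal nonnegative solution of the system: g(x) = ∫_{A^c} g(y) P(x,dy) + P(x,A) + Σ_{k=0}^{ℓ−1} C(ℓ,k) E_x[τ_A^k 1_{τ_A<∞}] for x ∈ A^c, and g(x) = 1 for x ∈ A; that is, it satisfies the system and every nonnegative solution of the system dominates it pointwise. -/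
open MeasureTheory ProbabilityTheory
open scoped ENNReal NNReal Classical

namespace MarkovTransience

variable {X : Type*} [MeasurableSpace X]

section PolyAux

lemma measurable_retF (P : Kernel X X) {A : Set X} (hA : MeasurableSet A) :
    ∀ n, Measurable (retF P A n)
  | 0 => measurable_const
  | 1 => P.measurable_coe hA
  | (n + 2) => by
    have h : Measurable (retF P A (n + 1)) := measurable_retF P hA (n + 1)
    have h2 : Measurable fun x => ∫⁻ y, Aᶜ.indicator (retF P A (n + 1)) y ∂(P x) :=
      (Measure.measurable_lintegral (h.indicator hA.compl)).comp P.measurable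
    simp_rw [lintegral_indicator hA.compl] at h2
    exact h2

lemma tsum_retF_shift (P : Kernel X X) {A : Set X} (hA : MeasurableSet A)
    (w : ℕ → ℝ≥0∞) (x : X) :
    ∑' n, w n * retF P A n x
      = w 1 * P x A + ∫⁻ y in Aᶜ, ∑' m, w (m + 2) * retF P A (m + 1) y ∂(P x) := by
  rw [tsum_eq_zero_add' ENNReal.summable,
    tsum_eq_zero_add' ENNReal.summable]
  have h0 : retF P A 0 x = 0 := rfl
  have h1 : retF P A 1 x = P x A := rfl
  rw [h0, h1, mul_zero, zero_add]
  congr 1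
  calc ∑' n, w (n + 1 + 1) * retF P A (n + 1 + 1) x
      = ∑' n, ∫⁻ y in Aᶜ, w (n + 2) * retF P A (n + 1) y ∂(P x) := by
        refine tsum_congr fun n => ?_
        have h2 : retF P A (n + 2) x = ∫⁻ y in Aᶜ, retF P A (n + 1) y ∂(P x) := rfl
        rw [show n + 1 + 1 = n + 2 from rfl, h2,
          lintegral_const_mul _ (measurable_retF P hA (n + 1))]
    _ = ∫⁻ y in Aᶜ, ∑' m, w (m + 2) * retF P A (m + 1) y ∂(P x) := by
        rw [← lintegral_tsum fun n => ((measurable_retF P hA (n + 1)).const_mul _).aemeasurable]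

lemma binom_expand (ℓ n : ℕ) :
    ((n + 1 : ℕ) : ℝ≥0∞) ^ ℓ
      = (n : ℝ≥0∞) ^ ℓ + ∑ k ∈ Finset.range ℓ, (ℓ.choose k : ℝ≥0∞) * (n : ℝ≥0∞) ^ k := by
  have h : ((n : ℝ≥0∞) + 1) ^ ℓ
      = ∑ k ∈ Finset.range (ℓ + 1), (n : ℝ≥0∞) ^ k * (ℓ.choose k : ℝ≥0∞) := by
    rw [add_pow]; simp
  push_cast
  rw [h, Finset.sum_range_succ, Nat.choose_self]
  rw [Finset.sum_congr rfl fun k _ => mul_comm ((n : ℝ≥0∞) ^ k) ((ℓ.choose k : ℝ≥0∞))]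
  push_cast
  ring

lemma retE_pow_split (P : Kernel X X) (A : Set X) (ℓ : ℕ) (x : X) :
    retE P A (fun n => ((n + 1 : ℕ) : ℝ≥0∞) ^ ℓ) x
      = (∑' n : ℕ, (n : ℝ≥0∞) ^ ℓ * retF P A n x)
        + ∑ k ∈ Finset.range ℓ, (ℓ.choose k : ℝ≥0∞)
            * retE P A (fun n => (n : ℝ≥0∞) ^ k) x := by
  unfold retE
  calc ∑' n, ((n + 1 : ℕ) : ℝ≥0∞) ^ ℓ * retF P A n x
      = ∑' n : ℕ, ((n : ℝ≥0∞) ^ ℓ * retF P A n x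
          + ∑ k ∈ Finset.range ℓ,
              (ℓ.choose k : ℝ≥0∞) * ((n : ℝ≥0∞) ^ k * retF P A n x)) := by
        refine tsum_congr fun n => ?_
        rw [binom_expand, add_mul, Finset.sum_mul]
        congr 1
        exact Finset.sum_congr rfl fun k _ => mul_assoc _ _ _
    _ = _ := by
        rw [ENNReal.tsum_add]
        congr 1
        rw [Summable.tsum_finsetSum fun k _ => ENNReal.summable]
        exact Finset.sum_congr rfl fun k _ => ENNReal.tsum_mul_left

lemma claim1 (P : Kernel X X) {A : Set X} (hA : MeasurableSet A) (ℓ : ℕ) (x : X) :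
    retE P A (fun n => ((n + 1 : ℕ) : ℝ≥0∞) ^ ℓ) x
      = (∫⁻ y in Aᶜ, retE P A (fun n => ((n + 1 : ℕ) : ℝ≥0∞) ^ ℓ) y ∂(P x)) + P x A
        + ∑ k ∈ Finset.range ℓ, (ℓ.choose k : ℝ≥0∞)
            * retE P A (fun n => (n : ℝ≥0∞) ^ k) x := by
  have hin : ∀ y : X, (∑' m : ℕ, ((m + 2 : ℕ) : ℝ≥0∞) ^ ℓ * retF P A (m + 1) y)
      = retE P A (fun n => ((n + 1 : ℕ) : ℝ≥0∞) ^ ℓ) y := by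
    intro y
    unfold retE
    conv_rhs => rw [tsum_eq_zero_add' ENNReal.summable]
    have h0 : retF P A 0 y = 0 := rfl
    simp only [h0, mul_zero, zero_add]
  have hshift := tsum_retF_shift P hA (fun n => (n : ℝ≥0∞) ^ ℓ) x
  simp only [Nat.cast_one, one_pow, one_mul] at hshift
  rw [retE_pow_split, hshift]
  rw [lintegral_congr fun y => hin y]
  ring

lemma partial_le (P : Kernel X X) {A : Set X} (hA : MeasurableSet A) (ℓ : ℕ)
    (g : X → ℝ≥0∞) (hg : Measurable g)
    (hsys : ∀ x ∉ A, g x = (∫⁻ y in Aᶜ, g y ∂(P x)) + P x A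
        + ∑ k ∈ Finset.range ℓ, (ℓ.choose k : ℝ≥0∞)
            * retE P A (fun n => (n : ℝ≥0∞) ^ k) x) :
    ∀ N, ∀ x ∉ A,
      (∑ n ∈ Finset.range N, ((n + 1 : ℕ) : ℝ≥0∞) ^ ℓ * retF P A n x) ≤ g x := by
  intro N
  induction N with
  | zero => intro x hx; simp
  | succ N ih =>
    intro x hx
    have split : (∑ n ∈ Finset.range (N + 1), ((n + 1 : ℕ) : ℝ≥0∞) ^ ℓ * retF P A n x)
        = (∑ n ∈ Finset.range (N + 1), (n : ℝ≥0∞) ^ ℓ * retF P A n x)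
          + ∑ n ∈ Finset.range (N + 1), ∑ k ∈ Finset.range ℓ,
              (ℓ.choose k : ℝ≥0∞) * ((n : ℝ≥0∞) ^ k * retF P A n x) := by
      rw [← Finset.sum_add_distrib]
      refine Finset.sum_congr rfl fun n _ => ?_
      rw [binom_expand, add_mul, Finset.sum_mul]
      congr 1
      exact Finset.sum_congr rfl fun k _ => mul_assoc _ _ _
    have hc : (∑ n ∈ Finset.range (N + 1), ∑ k ∈ Finset.range ℓ,
          (ℓ.choose k : ℝ≥0∞) * ((n : ℝ≥0∞) ^ k * retF P A n x))
        ≤ ∑ k ∈ Finset.range ℓ, (ℓ.choose k : ℝ≥0∞)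
            * retE P A (fun n => (n : ℝ≥0∞) ^ k) x := by
      rw [Finset.sum_comm]
      refine Finset.sum_le_sum fun k _ => ?_
      rw [← Finset.mul_sum]
      exact mul_le_mul_right (ENNReal.sum_le_tsum _) _
    have hS1 : (∑ n ∈ Finset.range (N + 1), (n : ℝ≥0∞) ^ ℓ * retF P A n x)
        ≤ (∫⁻ y in Aᶜ, (∑ n ∈ Finset.range N,
            ((n + 1 : ℕ) : ℝ≥0∞) ^ ℓ * retF P A n y) ∂(P x)) + P x A := by
      rw [Finset.sum_range_succ' (fun n => (n : ℝ≥0∞) ^ ℓ * retF P A n x) N]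
      have h0 : retF P A 0 x = 0 := rfl
      rw [h0, mul_zero, add_zero]
      cases N with
      | zero => simp
      | succ M =>
        rw [Finset.sum_range_succ'
          (fun i => ((i + 1 : ℕ) : ℝ≥0∞) ^ ℓ * retF P A (i + 1) x) M]
        have h1 : retF P A 1 x = P x A := rfl
        have hsum : (∑ j ∈ Finset.range M,
              ((j + 1 + 1 : ℕ) : ℝ≥0∞) ^ ℓ * retF P A (j + 1 + 1) x)
            = ∫⁻ y in Aᶜ, (∑ j ∈ Finset.range M,
                ((j + 2 : ℕ) : ℝ≥0∞) ^ ℓ * retF P A (j + 1) y) ∂(P x) := by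
          rw [lintegral_finset_sum _ fun j _ =>
            ((measurable_retF P hA (j + 1)).const_mul _)]
          refine Finset.sum_congr rfl fun j _ => ?_
          have h2 : retF P A (j + 2) x = ∫⁻ y in Aᶜ, retF P A (j + 1) y ∂(P x) := rfl
          rw [show j + 1 + 1 = j + 2 from rfl, h2,
            lintegral_const_mul _ (measurable_retF P hA (j + 1))]
        rw [hsum, h1]
        simp only [show ((0 + 1 : ℕ) : ℝ≥0∞) = 1 by norm_num, one_pow, one_mul]
        refine add_le_add_left (lintegral_mono fun y => le_of_eq ?_) _
        rw [Finset.sum_range_succ' (fun n => ((n + 1 : ℕ) : ℝ≥0∞) ^ ℓ * retF P A n y) M,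
          show retF P A 0 y = 0 from rfl, mul_zero, add_zero]
    have hint : (∫⁻ y in Aᶜ, (∑ n ∈ Finset.range N,
          ((n + 1 : ℕ) : ℝ≥0∞) ^ ℓ * retF P A n y) ∂(P x))
        ≤ ∫⁻ y in Aᶜ, g y ∂(P x) :=
      setLIntegral_mono hg fun y hy => ih y hy
    calc (∑ n ∈ Finset.range (N + 1), ((n + 1 : ℕ) : ℝ≥0∞) ^ ℓ * retF P A n x)
        ≤ ((∫⁻ y in Aᶜ, g y ∂(P x)) + P x A)
          + ∑ k ∈ Finset.range ℓ, (ℓ.choose k : ℝ≥0∞)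
              * retE P A (fun n => (n : ℝ≥0∞) ^ k) x := by
          rw [split]
          exact add_le_add (hS1.trans (add_le_add_left hint _)) hc
      _ = g x := (hsys x hx).symm

end PolyAux

theorem minimal_solution_polynomial_moment
    {X : Type*} [MeasurableSpace X] [MeasurableSpace.CountablyGenerated X]
    (P : Kernel X X) (hP : ∀ x, P x Set.univ ≤ 1) (ψ : Measure X)
    (hψ : IsMaxIrreducibility P ψ) (A : Set X) (hA : InBPlus ψ A)
    (ℓ : ℕ) (hℓ : 1 ≤ ℓ) :
    (∀ x, retE P A (fun n => ((n + 1 : ℕ) : ℝ≥0∞) ^ ℓ) x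
        = (∫⁻ y in Aᶜ, retE P A (fun n => ((n + 1 : ℕ) : ℝ≥0∞) ^ ℓ) y ∂(P x))
          + P x A
          + ∑ k ∈ Finset.range ℓ, (ℓ.choose k : ℝ≥0∞) * retE P A (fun n => (n : ℝ≥0∞) ^ k) x) ∧
    ((∀ x ∉ A, hitE P A (fun n => ((n + 1 : ℕ) : ℝ≥0∞) ^ ℓ) x
        = (∫⁻ y in Aᶜ, hitE P A (fun n => ((n + 1 : ℕ) : ℝ≥0∞) ^ ℓ) y ∂(P x))
          + P x A
          + ∑ k ∈ Finset.range ℓ, (ℓ.choose k : ℝ≥0∞) * retE P A (fun n => (n : ℝ≥0∞) ^ k) x) ∧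
      (∀ x ∈ A, hitE P A (fun n => ((n + 1 : ℕ) : ℝ≥0∞) ^ ℓ) x = 1)) ∧
    (∀ g : X → ℝ≥0∞, Measurable g →
      ((∀ x ∉ A, g x = (∫⁻ y in Aᶜ, g y ∂(P x)) + P x A
          + ∑ k ∈ Finset.range ℓ, (ℓ.choose k : ℝ≥0∞) * retE P A (fun n => (n : ℝ≥0∞) ^ k) x) ∧
        (∀ x ∈ A, g x = 1)) →
      ∀ x, hitE P A (fun n => ((n + 1 : ℕ) : ℝ≥0∞) ^ ℓ) x ≤ g x) := by
  have hAm : MeasurableSet A := hA.1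
  refine ⟨fun x => claim1 P hAm ℓ x, ⟨?_, ?_⟩, ?_⟩
  · intro x hx
    have heq : (∫⁻ y in Aᶜ, hitE P A (fun n => ((n + 1 : ℕ) : ℝ≥0∞) ^ ℓ) y ∂(P x))
        = ∫⁻ y in Aᶜ, retE P A (fun n => ((n + 1 : ℕ) : ℝ≥0∞) ^ ℓ) y ∂(P x) := by
      refine setLIntegral_congr_fun hAm.compl (fun y hy => ?_)
      exact if_neg hy
    rw [show hitE P A (fun n => ((n + 1 : ℕ) : ℝ≥0∞) ^ ℓ) x
        = retE P A (fun n => ((n + 1 : ℕ) : ℝ≥0∞) ^ ℓ) x from if_neg hx,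
      heq]
    exact claim1 P hAm ℓ x
  · intro x hx
    rw [show hitE P A (fun n => ((n + 1 : ℕ) : ℝ≥0∞) ^ ℓ) x
        = ((0 + 1 : ℕ) : ℝ≥0∞) ^ ℓ from if_pos hx]
    simp
  · intro g hg hsys x
    by_cases hx : x ∈ A
    · rw [show hitE P A (fun n => ((n + 1 : ℕ) : ℝ≥0∞) ^ ℓ) x
          = ((0 + 1 : ℕ) : ℝ≥0∞) ^ ℓ from if_pos hx, hsys.2 x hx]
      simp
    · rw [show hitE P A (fun n => ((n + 1 : ℕ) : ℝ≥0∞) ^ ℓ) x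
          = retE P A (fun n => ((n + 1 : ℕ) : ℝ≥0∞) ^ ℓ) x from if_neg hx]
      unfold retE
      rw [ENNReal.tsum_eq_iSup_nat]
      exact iSup_le fun N => partial_le P hAm ℓ g hg hsys.1 N x hx

end MarkovTransience
end

section
/- Assume Φ is ψ-irreducible with (possibly sub-stochastic) transition kernel P, and P_x(τ < ∞) = 1 for all x ∈ X. Then the following are equivalent. (1) Φ is uniformly geometric transient, i.e. there exists κ > 1 such that sup_{x∈X} Σ_{n≥1} κ^n P^n(x,X) < ∞. (2) There exists κ > 1 such that sup_{x∈X} E_x[κ^τ] < ∞. (3) There exist a constant λ ∈ (0,1) and a bounded function W ≥ 1 such that PW(x) ≤ λ W(x) for all x ∈ X. (4) There exists n_0 ∈ N such that sup_{x∈X} P^{n_0}(x,X) < 1. (5) sup_{x∈X} E_x[τ] < ∞. -/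
open MeasureTheory ProbabilityTheory
open scoped ENNReal NNReal Classical

namespace MarkovTransience

variable {X : Type*} [MeasurableSpace X]

section Aux

variable {P : Kernel X X}

lemma measurable_kernel_lintegral (P : Kernel X X) {f : X → ℝ≥0∞} (hf : Measurable f) :
    Measurable fun x => ∫⁻ y, f y ∂ P x := by
  simp_rw [MeasureTheory.lintegral_eq_iSup_eapprox_lintegral hf]
  refine .iSup fun n => ?_
  simp only [MeasureTheory.SimpleFunc.lintegral]
  exact Finset.measurable_sum _ fun c _ =>
    (Kernel.measurable_coe P ((SimpleFunc.eapprox f n).measurableSet_preimage _)).const_mul c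

lemma iterP_zero_univ (x : X) : iterP P 0 x Set.univ = 1 := by simp [iterP]

lemma iterP_succ_univ (n : ℕ) (x : X) :
    iterP P (n + 1) x Set.univ = ∫⁻ y, iterP P n y Set.univ ∂ P x := rfl

lemma measurable_iterP_univ (P : Kernel X X) : ∀ n, Measurable fun x => iterP P n x Set.univ
  | 0 => by simp only [iterP_zero_univ]; exact measurable_const
  | n + 1 => by
      simp only [iterP_succ_univ]
      exact measurable_kernel_lintegral P (measurable_iterP_univ P n)

lemma iterP_univ_le_one (hP : ∀ x, P x Set.univ ≤ 1) : ∀ n x, iterP P n x Set.univ ≤ 1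
  | 0, x => by simp [iterP_zero_univ]
  | n + 1, x => by
      rw [iterP_succ_univ]
      calc ∫⁻ y, iterP P n y Set.univ ∂ P x ≤ ∫⁻ _, 1 ∂ P x :=
            lintegral_mono fun y => iterP_univ_le_one hP n y
        _ = P x Set.univ := lintegral_one
        _ ≤ 1 := hP x

lemma iterP_univ_antitone (hP : ∀ x, P x Set.univ ≤ 1) :
    ∀ n x, iterP P (n + 1) x Set.univ ≤ iterP P n x Set.univ
  | 0, x => by rw [iterP_zero_univ]; exact iterP_univ_le_one hP 1 x
  | n + 1, x => by
      rw [iterP_succ_univ (n + 1), iterP_succ_univ n]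
      exact lintegral_mono fun y => iterP_univ_antitone hP n y

lemma lifeDist_add_iterP (hP : ∀ x, P x Set.univ ≤ 1) (n : ℕ) (x : X) :
    lifeDist P x n + iterP P (n + 1) x Set.univ = iterP P n x Set.univ :=
  tsub_add_cancel_of_le (iterP_univ_antitone hP n x)

lemma sum_lifeDist_add_iterP (hP : ∀ x, P x Set.univ ≤ 1) (N : ℕ) (x : X) :
    (∑ i ∈ Finset.range N, lifeDist P x i) + iterP P N x Set.univ = 1 := by
  induction N with
  | zero => simp [iterP_zero_univ]
  | succ N ih =>
      rw [Finset.sum_range_succ, add_assoc, lifeDist_add_iterP hP]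
      exact ih

lemma ennreal_sum_add_tsum_nat_add (f : ℕ → ℝ≥0∞) (N : ℕ) :
    (∑ i ∈ Finset.range N, f i) + ∑' m, f (m + N) = ∑' n, f n :=
  ENNReal.summable.sum_add_tsum_nat_add'

lemma iterP_univ_eq_tail (hP : ∀ x, P x Set.univ ≤ 1) {x : X}
    (hlife : (∑' n, lifeDist P x n) = 1) (N : ℕ) :
    iterP P N x Set.univ = ∑' m, lifeDist P x (m + N) := by
  have h1 : (∑ i ∈ Finset.range N, lifeDist P x i) + ∑' m, lifeDist P x (m + N) = 1 := by
    rw [ennreal_sum_add_tsum_nat_add (lifeDist P x) N]; exact hlife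
  have h2 := sum_lifeDist_add_iterP hP N x
  have hfin : (∑ i ∈ Finset.range N, lifeDist P x i) ≠ ∞ := by
    refine ne_top_of_le_ne_top ENNReal.one_ne_top ?_
    exact le_trans le_self_add h2.le
  exact (ENNReal.add_right_inj hfin).mp (h2.trans h1.symm)

lemma iterP_le_drift {lam : ℝ≥0∞} {W : X → ℝ≥0∞} (hWm : Measurable W)
    (hW1 : ∀ x, 1 ≤ W x) (hdrift : ∀ x, (∫⁻ y, W y ∂ P x) ≤ lam * W x) :
    ∀ n x, iterP P n x Set.univ ≤ lam ^ n * W x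
  | 0, x => by simpa [iterP_zero_univ] using hW1 x
  | n + 1, x => by
      rw [iterP_succ_univ]
      calc ∫⁻ y, iterP P n y Set.univ ∂ P x ≤ ∫⁻ y, lam ^ n * W y ∂ P x :=
            lintegral_mono fun y => iterP_le_drift hWm hW1 hdrift n y
        _ = lam ^ n * ∫⁻ y, W y ∂ P x := lintegral_const_mul _ hWm
        _ ≤ lam ^ n * (lam * W x) := mul_le_mul_right (hdrift x) _
        _ = lam ^ (n + 1) * W x := by ring

end Aux

theorem uniformlyGeomTransient_tfae
    {X : Type*} [MeasurableSpace X] [MeasurableSpace.CountablyGenerated X]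
    (P : Kernel X X) (hP : ∀ x, P x Set.univ ≤ 1) (ψ : Measure X)
    (hψ : IsIrreducibility P ψ) (hlife : ∀ x, (∑' n, lifeDist P x n) = 1) :
    [(∃ κ : ℝ≥0, 1 < κ ∧
        (⨆ x, ∑' n, (κ : ℝ≥0∞) ^ (n + 1) * iterP P (n + 1) x Set.univ) < ⊤),
     (∃ κ : ℝ≥0, 1 < κ ∧ (⨆ x, lifeE P (fun n => (κ : ℝ≥0∞) ^ n) x) < ⊤),
     (∃ lam : ℝ≥0∞, 0 < lam ∧ lam < 1 ∧ ∃ W : X → ℝ≥0∞, Measurable W ∧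
        (∀ x, 1 ≤ W x) ∧ (∃ M : ℝ≥0∞, M < ⊤ ∧ ∀ x, W x ≤ M) ∧
        ∀ x, act P W x ≤ lam * W x),
     (∃ n₀ : ℕ, 0 < n₀ ∧ (⨆ x, iterP P n₀ x Set.univ) < 1),
     ((⨆ x, lifeE P (fun n => (n : ℝ≥0∞)) x) < ⊤)].TFAE := by
  tfae_have 1 → 2 := by
    rintro ⟨κ, hκ, hC⟩
    refine ⟨κ, hκ, ?_⟩
    refine lt_of_le_of_lt (iSup_le fun x => ?_)
      (ENNReal.add_lt_top.mpr ⟨ENNReal.one_lt_top, hC⟩)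
    have hsplit := ennreal_sum_add_tsum_nat_add
      (fun n => (κ : ℝ≥0∞) ^ n * lifeDist P x n) 1
    rw [lifeE, ← hsplit, Finset.sum_range_one]
    refine add_le_add ?_ ?_
    · simp only [pow_zero, one_mul, lifeDist]
      exact tsub_le_self.trans (iterP_univ_le_one hP 0 x)
    · refine le_trans (ENNReal.tsum_le_tsum fun n => ?_)
        (le_iSup (fun x => ∑' n, (κ : ℝ≥0∞) ^ (n + 1) * iterP P (n + 1) x Set.univ) x)
      refine mul_le_mul_right ?_ _
      simp only [lifeDist]
      exact tsub_le_self
  tfae_have 2 → 5 := by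
    rintro ⟨κ, hκ, hC⟩
    set ε : ℝ≥0 := κ - 1 with hε_def
    have hε : (0 : ℝ≥0) < ε := tsub_pos_of_lt hκ
    have hεinv_ne_top : ((ε : ℝ≥0∞))⁻¹ ≠ ⊤ :=
      ENNReal.inv_ne_top.mpr (by exact_mod_cast hε.ne')
    have key : ∀ n : ℕ, (n : ℝ≥0∞) ≤ (ε : ℝ≥0∞)⁻¹ * (κ : ℝ≥0∞) ^ n := by
      intro n
      have h1 : (n : ℝ≥0) * ε ≤ κ ^ n := by
        rw [← NNReal.coe_le_coe]
        push_cast [NNReal.coe_sub hκ.le]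
        have hb : (-2 : ℝ) ≤ (κ : ℝ) - 1 := by
          have := κ.coe_nonneg; linarith
        have h2 := one_add_mul_le_pow hb n
        have h4 : (1 : ℝ) + ((κ : ℝ) - 1) = κ := by ring
        rw [h4] at h2
        have hn : (0 : ℝ) ≤ n := Nat.cast_nonneg n
        rw [hε_def, NNReal.coe_sub hκ.le, NNReal.coe_one]
        linarith
      have h2 : (n : ℝ≥0∞) * (ε : ℝ≥0∞) ≤ (κ : ℝ≥0∞) ^ n := by
        exact_mod_cast h1
      calc (n : ℝ≥0∞) = (ε : ℝ≥0∞)⁻¹ * ((n : ℝ≥0∞) * (ε : ℝ≥0∞)) := by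
            rw [mul_comm (n : ℝ≥0∞) (ε : ℝ≥0∞), ← mul_assoc,
              ENNReal.inv_mul_cancel (by exact_mod_cast hε.ne') (by simp), one_mul]
        _ ≤ (ε : ℝ≥0∞)⁻¹ * (κ : ℝ≥0∞) ^ n := mul_le_mul_right h2 _
    refine lt_of_le_of_lt (iSup_le fun x => ?_)
      (ENNReal.mul_lt_top hεinv_ne_top.lt_top hC)
    calc lifeE P (fun n => (n : ℝ≥0∞)) x
        ≤ ∑' n, ((ε : ℝ≥0∞)⁻¹ * (κ : ℝ≥0∞) ^ n) * lifeDist P x n :=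
          ENNReal.tsum_le_tsum fun n => mul_le_mul_left (key n) _
      _ = (ε : ℝ≥0∞)⁻¹ * lifeE P (fun n => (κ : ℝ≥0∞) ^ n) x := by
          rw [lifeE, ← ENNReal.tsum_mul_left]
          exact tsum_congr fun n => by ring
      _ ≤ (ε : ℝ≥0∞)⁻¹ * ⨆ x, lifeE P (fun n => (κ : ℝ≥0∞) ^ n) x :=
          mul_le_mul_right (le_iSup _ x) _
  tfae_have 5 → 4 := by
    intro hC
    obtain ⟨N, hN⟩ := ENNReal.exists_nat_gt hC.ne
    have hN0 : N ≠ 0 := by rintro rfl; simp at hN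
    refine ⟨N, Nat.pos_of_ne_zero hN0, ?_⟩
    have hkey : ∀ x, (N : ℝ≥0∞) * iterP P N x Set.univ ≤
        lifeE P (fun n => (n : ℝ≥0∞)) x := by
      intro x
      rw [iterP_univ_eq_tail hP (hlife x) N, ← ENNReal.tsum_mul_left]
      calc ∑' m, (N : ℝ≥0∞) * lifeDist P x (m + N)
          ≤ ∑' m, (((m + N : ℕ)) : ℝ≥0∞) * lifeDist P x (m + N) :=
            ENNReal.tsum_le_tsum fun m =>
              mul_le_mul_left (by exact_mod_cast Nat.le_add_left N m) _
        _ ≤ lifeE P (fun n => (n : ℝ≥0∞)) x := by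
            rw [lifeE, ← ennreal_sum_add_tsum_nat_add
              (fun n => (n : ℝ≥0∞) * lifeDist P x n) N]
            exact le_add_self
    have hNne : ((N : ℝ≥0∞)) ≠ 0 := by exact_mod_cast hN0
    have hNnt : ((N : ℝ≥0∞)) ≠ ⊤ := ENNReal.natCast_ne_top N
    refine lt_of_le_of_lt (iSup_le fun x => ?_)
      (?_ : (⨆ x, lifeE P (fun n => (n : ℝ≥0∞)) x) / (N : ℝ≥0∞) < 1)
    · rw [ENNReal.le_div_iff_mul_le (Or.inl hNne) (Or.inl hNnt)]
      rw [mul_comm]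
      exact (hkey x).trans (le_iSup _ x)
    · rw [ENNReal.div_lt_iff (Or.inl hNne) (Or.inl hNnt), one_mul]
      exact hN
  tfae_have 4 → 3 := by
    rintro ⟨n₀, hn₀, hsup⟩
    set u := ⨆ x, iterP P n₀ x Set.univ with hu_def
    have hu_ne : u ≠ ⊤ := (hsup.trans ENNReal.one_lt_top).ne
    set η : ℝ≥0 := max u.toNNReal 2⁻¹ with hη_def
    have hη1 : η < 1 := by
      refine max_lt ?_ (by rw [← NNReal.coe_lt_coe]; norm_num)
      rw [← ENNReal.coe_lt_one_iff, ENNReal.coe_toNNReal hu_ne]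
      exact hsup
    have hη2 : (2 : ℝ≥0)⁻¹ ≤ η := le_max_right _ _
    have hSη : ∀ x, iterP P n₀ x Set.univ ≤ (η : ℝ≥0∞) := by
      intro x
      refine le_trans (le_iSup (fun x => iterP P n₀ x Set.univ) x) ?_
      rw [← hu_def, ← ENNReal.coe_toNNReal hu_ne]
      exact ENNReal.coe_le_coe.mpr (le_max_left _ _)
    have hn₀R : (0 : ℝ) < (n₀ : ℝ) := by exact_mod_cast hn₀
    set e : ℝ≥0 := (1 - η) / (n₀ : ℝ≥0) with he_def
    have he_half : e ≤ 2⁻¹ := by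
      have h1 : (1 - η : ℝ≥0) ≤ 2⁻¹ := by
        refine le_trans (tsub_le_tsub_left hη2 1) ?_
        rw [← NNReal.coe_le_coe, NNReal.coe_sub (by norm_num)]
        norm_num
      refine le_trans (div_le_self zero_le ?_) h1
      exact_mod_cast hn₀
    have he1 : e ≤ 1 := he_half.trans (by norm_num)
    have he_pos : 0 < e := by
      refine div_pos (tsub_pos_of_lt hη1) ?_
      exact_mod_cast hn₀
    set α : ℝ≥0 := 1 - e with hα_def
    have hα_coe : (α : ℝ) = 1 - (e : ℝ) := NNReal.coe_sub he1
    have he_coe : (e : ℝ) = (1 - (η : ℝ)) / (n₀ : ℝ) := by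
      rw [he_def, NNReal.coe_div, NNReal.coe_sub hη1.le]
      norm_num
    have hα_pos : 0 < α := by
      rw [← NNReal.coe_pos, hα_coe]
      have : (e : ℝ) ≤ 2⁻¹ := by exact_mod_cast he_half
      linarith
    have hα1 : α < 1 := tsub_lt_self one_pos he_pos
    have hκey : η ≤ α ^ n₀ := by
      rw [← NNReal.coe_le_coe, NNReal.coe_pow, hα_coe]
      have hb : (-2 : ℝ) ≤ -(e : ℝ) := by
        have : (e : ℝ) ≤ 2⁻¹ := by exact_mod_cast he_half
        linarith
      have h2 := one_add_mul_le_pow hb n₀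
      have h3 : (1 : ℝ) + (n₀ : ℝ) * (-(e : ℝ)) = (η : ℝ) := by
        rw [he_coe]; field_simp; ring
      have h4 : (1 : ℝ) + -(e : ℝ) = 1 - (e : ℝ) := by ring
      rw [h3, h4] at h2
      exact h2
    have hαE0 : ((α : ℝ≥0∞)) ≠ 0 := by exact_mod_cast hα_pos.ne'
    have hαEt : ((α : ℝ≥0∞)) ≠ ⊤ := ENNReal.coe_ne_top
    set β : ℝ≥0∞ := ((α : ℝ≥0∞))⁻¹ with hβ_def
    have hβ_ne_top : β ≠ ⊤ := ENNReal.inv_ne_top.mpr hαE0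
    have hβ1 : 1 ≤ β := ENNReal.one_le_inv.mpr (by exact_mod_cast hα1.le)
    have hαβ : (α : ℝ≥0∞) * β = 1 := ENNReal.mul_inv_cancel hαE0 hαEt
    set W : X → ℝ≥0∞ := fun x => ∑ j ∈ Finset.range n₀, β ^ j * iterP P j x Set.univ
      with hW_def
    refine ⟨(α : ℝ≥0∞), by exact_mod_cast hα_pos, by exact_mod_cast hα1, W,
      ?_, ?_, ?_, ?_⟩
    · exact Finset.measurable_sum _ fun j _ => ((measurable_iterP_univ P j).const_mul _)
    · intro x
      calc (1 : ℝ≥0∞) = β ^ 0 * iterP P 0 x Set.univ := by simp [iterP_zero_univ]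
        _ ≤ W x := Finset.single_le_sum
            (f := fun j => β ^ j * iterP P j x Set.univ)
            (fun i _ => zero_le) (Finset.mem_range.mpr hn₀)
    · refine ⟨(n₀ : ℝ≥0∞) * β ^ n₀, ?_, ?_⟩
      · exact ENNReal.mul_lt_top (ENNReal.natCast_lt_top n₀)
          (ENNReal.pow_lt_top hβ_ne_top.lt_top)
      · intro x
        calc W x ≤ ∑ _j ∈ Finset.range n₀, β ^ n₀ := by
              refine Finset.sum_le_sum fun j hj => ?_
              calc β ^ j * iterP P j x Set.univ ≤ β ^ j * 1 :=
                    mul_le_mul_right (iterP_univ_le_one hP j x) _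
                _ = β ^ j := mul_one _
                _ ≤ β ^ n₀ := pow_le_pow_right₀ hβ1 (Finset.mem_range.mp hj).le
          _ = (n₀ : ℝ≥0∞) * β ^ n₀ := by
              rw [Finset.sum_const, Finset.card_range, nsmul_eq_mul]
    · intro x
      have hact : act P W x = ∑ j ∈ Finset.range n₀, β ^ j * iterP P (j + 1) x Set.univ := by
        rw [act, hW_def]
        rw [lintegral_finset_sum _ (fun j _ => ((measurable_iterP_univ P j).const_mul _))]
        refine Finset.sum_congr rfl fun j _ => ?_
        rw [lintegral_const_mul _ (measurable_iterP_univ P j), ← iterP_succ_univ]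
      have hβSn : β ^ n₀ * iterP P n₀ x Set.univ ≤ 1 := by
        calc β ^ n₀ * iterP P n₀ x Set.univ
            ≤ β ^ n₀ * ((α : ℝ≥0∞)) ^ n₀ := by
              refine mul_le_mul_right (le_trans (hSη x) ?_) _
              have := ENNReal.coe_le_coe.mpr hκey
              rw [ENNReal.coe_pow] at this
              exact this
          _ = ((α : ℝ≥0∞) * β) ^ n₀ := by rw [← mul_pow, mul_comm]
          _ = 1 := by rw [hαβ, one_pow]
      have hA : (∑ j ∈ Finset.range n₀, β ^ (j + 1) * iterP P (j + 1) x Set.univ) ≤ W x := by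
        rw [← ENNReal.add_le_add_iff_right ENNReal.one_ne_top]
        have lhs_eq : (∑ j ∈ Finset.range n₀, β ^ (j + 1) * iterP P (j + 1) x Set.univ) + 1
            = ∑ j ∈ Finset.range (n₀ + 1), β ^ j * iterP P j x Set.univ := by
          rw [Finset.sum_range_succ']
          simp [iterP_zero_univ]
        rw [lhs_eq, Finset.sum_range_succ]
        exact add_le_add le_rfl hβSn
      calc act P W x = ∑ j ∈ Finset.range n₀, β ^ j * iterP P (j + 1) x Set.univ := hact
        _ = ∑ j ∈ Finset.range n₀,
              (α : ℝ≥0∞) * (β ^ (j + 1) * iterP P (j + 1) x Set.univ) := by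
            refine Finset.sum_congr rfl fun j _ => ?_
            rw [← mul_assoc, pow_succ']
            rw [← mul_assoc, hαβ, one_mul]
        _ = (α : ℝ≥0∞) * ∑ j ∈ Finset.range n₀, β ^ (j + 1) * iterP P (j + 1) x Set.univ := by
            rw [Finset.mul_sum]
        _ ≤ (α : ℝ≥0∞) * W x := mul_le_mul_right hA _
  tfae_have 3 → 1 := by
    rintro ⟨lam, hlam0, hlam1, W, hWm, hW1, ⟨M, hM, hWM⟩, hdrift⟩
    have hS := iterP_le_drift (P := P) hWm hW1 (fun x => hdrift x)
    set l : ℝ≥0 := lam.toNNReal with hl_def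
    have hlam_ne_top : lam ≠ ⊤ := (hlam1.trans ENNReal.one_lt_top).ne
    have hlam_eq : lam = (l : ℝ≥0∞) := (ENNReal.coe_toNNReal hlam_ne_top).symm
    have hl1 : l < 1 := by
      rw [← ENNReal.coe_lt_one_iff, ← hlam_eq]; exact hlam1
    set κ : ℝ≥0 := 2 / (1 + l) with hκ_def
    have hden : (0 : ℝ≥0) < 1 + l := by positivity
    have hκ1 : 1 < κ := by
      rw [hκ_def, lt_div_iff₀ hden]
      calc (1 : ℝ≥0) * (1 + l) = 1 + l := one_mul _
        _ < 2 := by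
          have : l < 1 := hl1
          rw [← NNReal.coe_lt_coe]; push_cast
          rw [← NNReal.coe_lt_coe] at this; push_cast at this
          linarith
    have hκl : κ * l < 1 := by
      rw [hκ_def, div_mul_eq_mul_div, div_lt_iff₀ hden, one_mul]
      rw [← NNReal.coe_lt_coe]; push_cast
      rw [← NNReal.coe_lt_coe] at hl1; push_cast at hl1
      linarith
    refine ⟨κ, hκ1, ?_⟩
    have hgeo : ∑' n, ((κ * l : ℝ≥0) : ℝ≥0∞) ^ (n + 1) < ⊤ := by
      rw [ENNReal.tsum_geometric_add_one]
      refine ENNReal.mul_lt_top ENNReal.coe_lt_top ?_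
      rw [ENNReal.inv_lt_top]
      exact tsub_pos_of_lt (ENNReal.coe_lt_one_iff.mpr hκl)
    refine lt_of_le_of_lt (iSup_le fun x => ?_) (ENNReal.mul_lt_top hM hgeo)
    calc ∑' n, (κ : ℝ≥0∞) ^ (n + 1) * iterP P (n + 1) x Set.univ
        ≤ ∑' n, (κ : ℝ≥0∞) ^ (n + 1) * (lam ^ (n + 1) * W x) :=
          ENNReal.tsum_le_tsum fun n => mul_le_mul_right (hS (n + 1) x) _
      _ ≤ ∑' n, ((κ * l : ℝ≥0) : ℝ≥0∞) ^ (n + 1) * M := by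
          refine ENNReal.tsum_le_tsum fun n => ?_
          rw [hlam_eq, ENNReal.coe_mul, mul_pow, mul_assoc]
          exact mul_le_mul_right (mul_le_mul_right (hWM x) _) _
      _ = M * ∑' n, ((κ * l : ℝ≥0) : ℝ≥0∞) ^ (n + 1) := by
          rw [← ENNReal.tsum_mul_left]
          exact tsum_congr fun n => mul_comm _ _
  tfae_finish

end MarkovTransience
end
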